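/- Let G be a finite non-abelian group with m(G) < k(G) - 1. Then every non-identity element of G has prime order. -/

import Mathlib

/-- `kClasses G` is the number of conjugacy classes of `G`. -/
noncomputable def kClasses (G : Type*) [Group G] : ℕ := Nat.card (ConjClasses G)

/-- `mVal G` is the least positive integer `n` such that the union of any `n` distinct
non-trivial conjugacy classes of `G` together with the identity of `G` is a subgroup of `G`. -/
noncomputable def mVal (G : Type*) [Group G] : ℕ :=
  sInf {n : ℕ | 0 < n ∧ ∀ S : Finset (ConjClasses G),
    S.card = n → (∀ c ∈ S, c ≠ ConjClasses.mk (1 : G)) →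
    ∃ H : Subgroup G, (H : Set G) = insert (1 : G) (⋃ c ∈ S, c.carrier)}

lemma isConj_orderOf_eq {G : Type*} [Group G] {a b : G} (h : IsConj a b) :
    orderOf a = orderOf b := by
  rw [isConj_iff] at h
  obtain ⟨c, rfl⟩ := h
  exact (orderOf_injective (MulAut.conj c).toMonoidHom (MulAut.conj c).injective a).symm

theorem stmt_5 (G : Type*) [Group G] [Finite G]
    (hna : ¬ ∀ a b : G, a * b = b * a) (h : mVal G < kClasses G - 1) :
    ∀ x : G, x ≠ 1 → (orderOf x).Prime := by
  classical
  have hfin : Finite (ConjClasses G) := Quotient.finite _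
  have : Fintype (ConjClasses G) := Fintype.ofFinite _
  push_neg at hna
  obtain ⟨a, b, hab⟩ := hna
  have ha1 : a ≠ 1 := by rintro rfl; simp at hab
  have hka : kClasses G = Fintype.card (ConjClasses G) := Nat.card_eq_fintype_card
  have mk_ne_one : ∀ g : G, g ≠ 1 → ConjClasses.mk g ≠ ConjClasses.mk (1 : G) :=
    fun g hg hcon => hg (isConj_one_left.mp (ConjClasses.mk_eq_mk_iff_isConj.mp hcon))
  have hmk : ConjClasses.mk a ≠ ConjClasses.mk (1 : G) := mk_ne_one a ha1
  have hk2 : 2 ≤ kClasses G := by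
    rw [hka]
    exact Fintype.one_lt_card_iff_nontrivial.mpr ⟨_, _, hmk⟩
  -- the defining set of mVal contains kClasses G - 1
  set P : Set ℕ := {n : ℕ | 0 < n ∧ ∀ S : Finset (ConjClasses G),
    S.card = n → (∀ c ∈ S, c ≠ ConjClasses.mk (1 : G)) →
    ∃ H : Subgroup G, (H : Set G) = insert (1 : G) (⋃ c ∈ S, c.carrier)} with hP
  have hmemP : (kClasses G - 1) ∈ P := by
    refine ⟨by omega, fun S hScard hS1 => ⟨⊤, ?_⟩⟩
    have hSeq : S = Finset.univ.erase (ConjClasses.mk (1 : G)) := by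
      apply Finset.eq_of_subset_of_card_le
      · exact fun c hc => Finset.mem_erase.mpr ⟨hS1 c hc, Finset.mem_univ c⟩
      · rw [Finset.card_erase_of_mem (Finset.mem_univ _), Finset.card_univ, hScard, hka]
    ext g
    simp only [Subgroup.coe_top, Set.mem_univ, true_iff]
    rcases eq_or_ne g 1 with rfl | hg
    · exact Set.mem_insert _ _
    · refine Set.mem_insert_iff.mpr (Or.inr (Set.mem_iUnion₂.mpr ⟨ConjClasses.mk g, ?_,
        ConjClasses.mem_carrier_mk⟩))
      rw [hSeq]
      exact Finset.mem_erase.mpr ⟨mk_ne_one g hg, Finset.mem_univ _⟩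
  have hmval : mVal G ∈ P := Nat.sInf_mem ⟨_, hmemP⟩
  obtain ⟨hpos, hprop⟩ := hmval
  intro x hx
  set N := orderOf x with hN
  have hN0 : N ≠ 0 := (orderOf_pos x).ne'
  have hN1 : N ≠ 1 := by simpa [hN, orderOf_eq_one_iff] using hx
  by_contra hnp
  set p := N.minFac with hp
  have hpp : p.Prime := Nat.minFac_prime hN1
  have hpd : p ∣ N := Nat.minFac_dvd N
  have hop : orderOf (x ^ p) = N / p := by
    rw [orderOf_pow, ← hN, Nat.gcd_eq_right hpd]
  have hNp1 : N / p ≠ 1 := by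
    intro hcon
    apply hnp
    have h2 := Nat.div_mul_cancel hpd
    rw [hcon, one_mul] at h2
    rw [← h2]; exact hpp
  have hxp1 : x ^ p ≠ 1 := by
    intro hcon
    rw [← orderOf_eq_one_iff, hop] at hcon
    exact hNp1 hcon
  have hneq : ConjClasses.mk (x ^ p) ≠ ConjClasses.mk x := by
    intro hcon
    rw [ConjClasses.mk_eq_mk_iff_isConj] at hcon
    have := isConj_orderOf_eq hcon
    rw [hop, ← hN] at this
    have hlt : N / p < N := Nat.div_lt_self (Nat.pos_of_ne_zero hN0) hpp.one_lt
    omega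
  -- ambient finset avoiding the classes of 1 and x^p
  set T : Finset (ConjClasses G) :=
    (Finset.univ.erase (ConjClasses.mk (1 : G))).erase (ConjClasses.mk (x ^ p)) with hT
  have hxp1' : ConjClasses.mk (x ^ p) ≠ ConjClasses.mk (1 : G) := mk_ne_one _ hxp1
  have hTcard : T.card = kClasses G - 2 := by
    rw [hT, Finset.card_erase_of_mem
        (Finset.mem_erase.mpr ⟨hxp1', Finset.mem_univ _⟩),
      Finset.card_erase_of_mem (Finset.mem_univ _), Finset.card_univ, hka]
    omega
  have hxT : ConjClasses.mk x ∈ T := by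
    exact Finset.mem_erase.mpr ⟨fun hcon => hneq hcon.symm,
      Finset.mem_erase.mpr ⟨mk_ne_one _ hx, Finset.mem_univ _⟩⟩
  obtain ⟨S, hSsub1, hSsub, hScard⟩ :=
    Finset.exists_subsuperset_card_eq (t := T) (n := mVal G)
      (Finset.singleton_subset_iff.mpr hxT) (by rw [Finset.card_singleton]; exact hpos) (by omega)
  have hall : ∀ c ∈ S, c ≠ ConjClasses.mk (1 : G) := fun c hc =>
    (Finset.mem_erase.mp (Finset.mem_erase.mp (hSsub hc)).2).1
  obtain ⟨H, hH⟩ := hprop S hScard hall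
  have hxH : x ∈ (H : Set G) := by
    rw [hH]
    exact Set.mem_insert_iff.mpr (Or.inr (Set.mem_iUnion₂.mpr
      ⟨ConjClasses.mk x, hSsub1 (Finset.mem_singleton_self _), ConjClasses.mem_carrier_mk⟩))
  have hxpH : x ^ p ∈ (H : Set G) := H.pow_mem hxH p
  rw [hH] at hxpH
  rcases Set.mem_insert_iff.mp hxpH with hcon | hcon
  · exact hxp1 hcon
  · obtain ⟨c, hcS, hcmem⟩ := Set.mem_iUnion₂.mp hcon
    rw [ConjClasses.mem_carrier_iff_mk_eq] at hcmem
    subst hcmem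
    exact (Finset.mem_erase.mp (hSsub hcS)).1 rfl
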